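/- Let V be a finite set partitioned into disjoint nonempty sets A₁,…,A_m, π a probability distribution on V with π(A_i) > 0 for all i, and y, y' : V → ℝᵈ two maps such that ‖y_u − y_v‖ = ‖y'_u − y'_v‖ for all u, v in the same part A_i. Let μ_y(A_i) = ∑_{v∈A_i} (π_v/π(A_i)) y_v and similarly μ_{y'}(A_i). Then Var_π(y) − Var_π(y') = ∑_{i<j} π(A_i) π(A_j) (‖μ_y(A_i) − μ_y(A_j)‖² − ‖μ_{y'}(A_i) − μ_{y'}(A_j)‖²). -/

import Mathlib

open Finset

section aux

variable {E : Type*} [NormedAddCommGroup E] [InnerProductSpace ℝ E]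

lemma my_inner_sum_sum {ι : Type*} (s : Finset ι) (w : ι → ℝ) (y : ι → E) :
    (inner ℝ (∑ u ∈ s, w u • y u) (∑ v ∈ s, w v • y v) : ℝ) =
      ∑ u ∈ s, ∑ v ∈ s, w u * w v * (inner ℝ (y u) (y v) : ℝ) := by
  rw [sum_inner]
  refine Finset.sum_congr rfl fun u _ => ?_
  rw [inner_sum]
  refine Finset.sum_congr rfl fun v _ => ?_
  rw [real_inner_smul_left, real_inner_smul_right]; ring

lemma my_lemA {ι : Type*} (s : Finset ι) (w : ι → ℝ) (y : ι → E) :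
    ∑ u ∈ s, ∑ v ∈ s, w u * w v * ‖y u - y v‖ ^ 2 =
      2 * (∑ v ∈ s, w v) * (∑ v ∈ s, w v * ‖y v‖ ^ 2)
        - 2 * ‖∑ v ∈ s, w v • y v‖ ^ 2 := by
  have hn : ‖∑ v ∈ s, w v • y v‖ ^ 2
      = ∑ u ∈ s, ∑ v ∈ s, w u * w v * (inner ℝ (y u) (y v) : ℝ) := by
    rw [← real_inner_self_eq_norm_sq, my_inner_sum_sum]
  have expand : ∀ u v, w u * w v * ‖y u - y v‖ ^ 2 =
      (w u * ‖y u‖ ^ 2) * w v + w u * (w v * ‖y v‖ ^ 2)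
        - 2 * (w u * w v * (inner ℝ (y u) (y v) : ℝ)) := by
    intro u v
    rw [norm_sub_sq_real]; ring
  simp only [expand, Finset.sum_sub_distrib, Finset.sum_add_distrib,
    ← Finset.sum_mul, ← Finset.mul_sum]
  rw [hn]; ring

lemma my_lemB {ι : Type*} [Fintype ι] (w : ι → ℝ) (y : ι → E) (h1 : ∑ v, w v = 1) :
    ∑ v, w v * ‖y v - ∑ u, w u • y u‖ ^ 2
      = ∑ v, w v * ‖y v‖ ^ 2 - ‖∑ u, w u • y u‖ ^ 2 := by
  set μ := ∑ u, w u • y u with hμ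
  have hin : ∑ v, w v * (inner ℝ (y v) μ : ℝ) = ‖μ‖ ^ 2 := by
    rw [← real_inner_self_eq_norm_sq, hμ, sum_inner]
    exact Finset.sum_congr rfl fun v _ => (real_inner_smul_left _ _ _).symm
  have expand : ∀ v, w v * ‖y v - μ‖ ^ 2 =
      w v * ‖y v‖ ^ 2 - 2 * (w v * (inner ℝ (y v) μ : ℝ)) + w v * ‖μ‖ ^ 2 := by
    intro v; rw [norm_sub_sq_real]; ring
  simp only [expand, Finset.sum_add_distrib, Finset.sum_sub_distrib,
    ← Finset.mul_sum, ← Finset.sum_mul]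
  rw [hin, h1]; ring

lemma my_sum_part {V M : Type*} [Fintype V] [AddCommMonoid M] {m : ℕ} (A : Fin m → Finset V)
    (hdisj : ∀ i j, i ≠ j → Disjoint (A i) (A j))
    (hcover : ∀ v : V, ∃ i, v ∈ A i) (f : V → M) :
    ∑ v, f v = ∑ i, ∑ v ∈ A i, f v := by
  classical
  have h : (Finset.univ : Finset V) = Finset.univ.biUnion A := by
    ext v; simpa using hcover v
  rw [h, Finset.sum_biUnion]
  exact fun i _ j _ hij => hdisj i j hij


lemma my_smul_norm (c : ℝ) (hc : 0 < c) (x : E) :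
    c * ‖c⁻¹ • x‖ ^ 2 = c⁻¹ * ‖x‖ ^ 2 := by
  rw [norm_smul, Real.norm_eq_abs, abs_of_nonneg (inv_nonneg.mpr hc.le), mul_pow]
  field_simp

lemma my_half_sum {n : ℕ} (F : Fin n → Fin n → ℝ)
    (hsymm : ∀ i j, F i j = F j i) (hdiag : ∀ i, F i i = 0) :
    ∑ i, ∑ j ∈ univ.filter (fun j => i < j), F i j
      = (1 / 2) * ∑ i, ∑ j, F i j := by
  have hswap : ∑ i, ∑ j ∈ univ.filter (fun j => j < i), F i j
      = ∑ i, ∑ j ∈ univ.filter (fun j => i < j), F i j := by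
    rw [Finset.sum_comm' (t' := univ) (s' := fun j => univ.filter (fun i => j < i))]
    · exact Finset.sum_congr rfl fun j _ =>
        Finset.sum_congr rfl fun i _ => hsymm i j
    · intro i j; simp [and_comm]
  have key : ∀ i : Fin n, ∑ j, F i j
      = ∑ j ∈ univ.filter (fun j => i < j), F i j
        + ∑ j ∈ univ.filter (fun j => j < i), F i j := by
    intro i
    rw [← Finset.sum_filter_add_sum_filter_not univ (fun j => i < j)]
    congr 1
    have hset : univ.filter (fun j => ¬ i < j)
        = insert i (univ.filter (fun j => j < i)) := by
      ext j
      simp only [mem_filter, mem_univ, true_and, mem_insert, not_lt]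
      rw [le_iff_lt_or_eq]
      tauto
    rw [hset, Finset.sum_insert (by simp), hdiag, zero_add]
  have : ∑ i, ∑ j, (F i j : ℝ)
      = ∑ i, ∑ j ∈ univ.filter (fun j => i < j), F i j
        + ∑ i, ∑ j ∈ univ.filter (fun j => j < i), F i j := by
    rw [← Finset.sum_add_distrib]
    exact Finset.sum_congr rfl fun i _ => key i
  rw [this, hswap]; ring

end aux

set_option maxHeartbeats 1000000 in
open Finset in
theorem variance_diff_partwise_isometry {V : Type*} [Fintype V] (d m : ℕ)
    (π : V → ℝ) (hπ : ∀ v, 0 ≤ π v) (hsum : ∑ v, π v = 1)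
    (A : Fin m → Finset V)
    (hdisj : ∀ i j, i ≠ j → Disjoint (A i) (A j))
    (hne : ∀ i, (A i).Nonempty)
    (hcover : ∀ v : V, ∃ i, v ∈ A i)
    (hpos : ∀ i, 0 < ∑ v ∈ A i, π v)
    (y y' : V → EuclideanSpace ℝ (Fin d))
    (hiso : ∀ i, ∀ u ∈ A i, ∀ v ∈ A i, ‖y u - y v‖ = ‖y' u - y' v‖) :
    (∑ v, π v * ‖y v - ∑ u, π u • y u‖ ^ 2) -
      (∑ v, π v * ‖y' v - ∑ u, π u • y' u‖ ^ 2) =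
    ∑ i, ∑ j ∈ univ.filter (fun j => i < j),
      (∑ v ∈ A i, π v) * (∑ v ∈ A j, π v) *
        (‖((∑ v ∈ A i, π v)⁻¹ • ∑ v ∈ A i, π v • y v) -
            ((∑ v ∈ A j, π v)⁻¹ • ∑ v ∈ A j, π v • y v)‖ ^ 2 -
         ‖((∑ v ∈ A i, π v)⁻¹ • ∑ v ∈ A i, π v • y' v) -
            ((∑ v ∈ A j, π v)⁻¹ • ∑ v ∈ A j, π v • y' v)‖ ^ 2) := by
  classical
  set p : Fin m → ℝ := fun i => ∑ v ∈ A i, π v with hp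
  set s : Fin m → EuclideanSpace ℝ (Fin d) := fun i => ∑ v ∈ A i, π v • y v with hs
  set s' : Fin m → EuclideanSpace ℝ (Fin d) := fun i => ∑ v ∈ A i, π v • y' v with hs'
  set z : Fin m → EuclideanSpace ℝ (Fin d) := fun i => (p i)⁻¹ • s i with hz
  set z' : Fin m → EuclideanSpace ℝ (Fin d) := fun i => (p i)⁻¹ • s' i with hz'
  set T : Fin m → ℝ := fun i => ∑ v ∈ A i, π v * ‖y v‖ ^ 2 with hT
  set T' : Fin m → ℝ := fun i => ∑ v ∈ A i, π v * ‖y' v‖ ^ 2 with hT'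
  set μ : EuclideanSpace ℝ (Fin d) := ∑ u, π u • y u with hμ
  set μ' : EuclideanSpace ℝ (Fin d) := ∑ u, π u • y' u with hμ'
  have hpne : ∀ i, p i ≠ 0 := fun i => (hpos i).ne'
  have hp1 : ∑ i, p i = 1 := by
    rw [← my_sum_part A hdisj hcover π]; exact hsum
  have hμsum : ∑ i, s i = μ := (my_sum_part A hdisj hcover _).symm
  have hμ'sum : ∑ i, s' i = μ' := (my_sum_part A hdisj hcover _).symm
  -- within-part: difference of second moments
  have hwithin : ∀ i, T i - T' i = (p i)⁻¹ * (‖s i‖ ^ 2 - ‖s' i‖ ^ 2) := by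
    intro i
    have h1 := my_lemA (A i) π y
    have h2 := my_lemA (A i) π y'
    have heq : ∑ u ∈ A i, ∑ v ∈ A i, π u * π v * ‖y u - y v‖ ^ 2
        = ∑ u ∈ A i, ∑ v ∈ A i, π u * π v * ‖y' u - y' v‖ ^ 2 := by
      refine Finset.sum_congr rfl fun u hu => Finset.sum_congr rfl fun v hv => ?_
      rw [hiso i u hu v hv]
    have hcomb : 2 * p i * T i - 2 * ‖s i‖ ^ 2 = 2 * p i * T' i - 2 * ‖s' i‖ ^ 2 := by
      rw [← h1, ← h2]; exact heq
    have hne0 := hpne i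
    field_simp
    nlinarith [hcomb]
  -- norms of z
  have hznorm : ∀ i, p i * ‖z i‖ ^ 2 = (p i)⁻¹ * ‖s i‖ ^ 2 := fun i =>
    my_smul_norm (p i) (hpos i) (s i)
  have hz'norm : ∀ i, p i * ‖z' i‖ ^ 2 = (p i)⁻¹ * ‖s' i‖ ^ 2 := fun i =>
    my_smul_norm (p i) (hpos i) (s' i)
  have hpz : ∑ i, p i • z i = μ := by
    rw [← hμsum]
    exact Finset.sum_congr rfl fun i _ => smul_inv_smul₀ (hpne i) _
  have hpz' : ∑ i, p i • z' i = μ' := by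
    rw [← hμ'sum]
    exact Finset.sum_congr rfl fun i _ => smul_inv_smul₀ (hpne i) _
  -- between-part double sums
  have hbetween : ∑ i, ∑ j, p i * p j * ‖z i - z j‖ ^ 2
      = 2 * (∑ i, (p i)⁻¹ * ‖s i‖ ^ 2) - 2 * ‖μ‖ ^ 2 := by
    have h : ∑ i, p i * ‖z i‖ ^ 2 = ∑ i, (p i)⁻¹ * ‖s i‖ ^ 2 :=
      Finset.sum_congr rfl fun i _ => hznorm i
    rw [my_lemA univ p z, hp1, hpz, mul_one, h]
  have hbetween' : ∑ i, ∑ j, p i * p j * ‖z' i - z' j‖ ^ 2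
      = 2 * (∑ i, (p i)⁻¹ * ‖s' i‖ ^ 2) - 2 * ‖μ'‖ ^ 2 := by
    have h : ∑ i, p i * ‖z' i‖ ^ 2 = ∑ i, (p i)⁻¹ * ‖s' i‖ ^ 2 :=
      Finset.sum_congr rfl fun i _ => hz'norm i
    rw [my_lemA univ p z', hp1, hpz', mul_one, h]
  -- RHS via half-sum
  have hRHS : ∑ i, ∑ j ∈ univ.filter (fun j => i < j),
      p i * p j * (‖z i - z j‖ ^ 2 - ‖z' i - z' j‖ ^ 2)
      = (∑ i, (p i)⁻¹ * ‖s i‖ ^ 2 - ‖μ‖ ^ 2)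
        - (∑ i, (p i)⁻¹ * ‖s' i‖ ^ 2 - ‖μ'‖ ^ 2) := by
    have hFsymm : ∀ i j : Fin m,
        p i * p j * (‖z i - z j‖ ^ 2 - ‖z' i - z' j‖ ^ 2)
          = p j * p i * (‖z j - z i‖ ^ 2 - ‖z' j - z' i‖ ^ 2) := by
      intro i j; rw [norm_sub_rev (z i), norm_sub_rev (z' i)]; ring
    have hFdiag : ∀ i : Fin m,
        p i * p i * (‖z i - z i‖ ^ 2 - ‖z' i - z' i‖ ^ 2) = 0 := by
      intro i; simp
    rw [my_half_sum (fun i j => p i * p j * (‖z i - z j‖ ^ 2 - ‖z' i - z' j‖ ^ 2))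
      hFsymm hFdiag]
    have hsplit : ∑ i, ∑ j, p i * p j * (‖z i - z j‖ ^ 2 - ‖z' i - z' j‖ ^ 2)
        = (∑ i, ∑ j, p i * p j * ‖z i - z j‖ ^ 2)
          - ∑ i, ∑ j, p i * p j * ‖z' i - z' j‖ ^ 2 := by
      rw [← Finset.sum_sub_distrib]
      refine Finset.sum_congr rfl fun i _ => ?_
      rw [← Finset.sum_sub_distrib]
      exact Finset.sum_congr rfl fun j _ => by ring
    rw [hsplit, hbetween, hbetween']
    ring
  -- LHS via lemB and partition
  have hL1 : ∑ v, π v * ‖y v - μ‖ ^ 2 = (∑ i, T i) - ‖μ‖ ^ 2 := by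
    rw [hμ, my_lemB π y hsum, ← my_sum_part A hdisj hcover (fun v => π v * ‖y v‖ ^ 2)]
  have hL2 : ∑ v, π v * ‖y' v - μ'‖ ^ 2 = (∑ i, T' i) - ‖μ'‖ ^ 2 := by
    rw [hμ', my_lemB π y' hsum, ← my_sum_part A hdisj hcover (fun v => π v * ‖y' v‖ ^ 2)]
  have hTdiff : (∑ i, T i) - (∑ i, T' i)
      = ∑ i, (p i)⁻¹ * ‖s i‖ ^ 2 - ∑ i, (p i)⁻¹ * ‖s' i‖ ^ 2 := by
    rw [← Finset.sum_sub_distrib, ← Finset.sum_sub_distrib]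
    refine Finset.sum_congr rfl fun i _ => ?_
    rw [hwithin i]; ring
  calc (∑ v, π v * ‖y v - μ‖ ^ 2) - (∑ v, π v * ‖y' v - μ'‖ ^ 2)
      = ((∑ i, T i) - ‖μ‖ ^ 2) - ((∑ i, T' i) - ‖μ'‖ ^ 2) := by rw [hL1, hL2]
    _ = (∑ i, (p i)⁻¹ * ‖s i‖ ^ 2 - ‖μ‖ ^ 2)
        - (∑ i, (p i)⁻¹ * ‖s' i‖ ^ 2 - ‖μ'‖ ^ 2) := by
          have := hTdiff; linarith
    _ = ∑ i, ∑ j ∈ univ.filter (fun j => i < j),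
        p i * p j * (‖z i - z j‖ ^ 2 - ‖z' i - z' j‖ ^ 2) := hRHS.symm
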